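/- In the hierarchical setup, assume that d(x, g_l(x)) ≤ 2^l for all x ∈ X, that d(g_i(x), g_{i+1}(x)) ≤ 2^{i+1} for all x ∈ X and all l ≤ i < r, and that g_r is a constant map. Then for all probability distributions p and q on X, W_d(p,q) ≤ 2^l·‖p−q‖₁ + Σ_{i=l}^{r−1} 2^{i+1}·‖g_i♯p − g_i♯q‖₁. -/

import Mathlib

/-- `p` is a probability distribution on the finite set `X`. -/
def IsProb {X : Type*} [Fintype X] (p : X → ℝ) : Prop :=
  (∀ x, 0 ≤ p x) ∧ ∑ x, p x = 1

/-- `M` is a coupling of `p` and `q`: a probability distribution on `X × X`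
whose first marginal is `p` and second marginal is `q`. -/
def IsCoupling {X : Type*} [Fintype X] (p q : X → ℝ) (M : X × X → ℝ) : Prop :=
  (∀ z, 0 ≤ M z) ∧ (∀ x, ∑ y, M (x, y) = p x) ∧ (∀ y, ∑ x, M (x, y) = q y)

/-- The Wasserstein (transportation) distance between `p` and `q` with respect to the
cost function `c`: the infimum, over all couplings `M` of `p` and `q`, of the expected cost. -/
noncomputable def wassersteinDist {X : Type*} [Fintype X] (c : X → X → ℝ) (p q : X → ℝ) : ℝ :=
  sInf {w : ℝ | ∃ M : X × X → ℝ, IsCoupling p q M ∧ w = ∑ z : X × X, M z * c z.1 z.2}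

/-- The `L₁` distance between two distributions on a finite set. -/
noncomputable def l1Dist {X : Type*} [Fintype X] (p q : X → ℝ) : ℝ :=
  ∑ x, |p x - q x|

/-- The pushforward of the distribution `p` along the map `g`. -/
noncomputable def pushforward {X : Type*} [Fintype X] [DecidableEq X]
    (g : X → X) (p : X → ℝ) : X → ℝ :=
  fun z => ∑ x ∈ Finset.univ.filter (fun x => g x = z), p x

/-- The tree metric associated with the hierarchical family of maps `g i`, levels
`l ≤ i ≤ r`: `d_T x x = 0` and, for `x ≠ y`,
`d_T x y = 2^(l+1) + ∑_{i=l}^{r-1} 2^(i+2) · 1[g i x ≠ g i y]`. -/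
noncomputable def treeDist {X : Type*} [DecidableEq X] (l r : ℤ) (g : ℤ → X → X)
    (x y : X) : ℝ :=
  if x = y then 0
  else (2 : ℝ) ^ (l + 1) +
    ∑ i ∈ Finset.Icc l (r - 1), if g i x ≠ g i y then (2 : ℝ) ^ (i + 2) else 0

section Aux

set_option linter.unusedSectionVars false

def Hc {X : Type*} (h : ℕ → X → X) : ℕ → X → X
  | 0 => id
  | k + 1 => h k ∘ Hc h k

lemma Hc_shift {X : Type*} (h : ℕ → X → X) (k : ℕ) (x : X) :
    Hc (fun j => h (j + 1)) k (h 0 x) = Hc h (k + 1) x := by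
  induction k with
  | zero => rfl
  | succ k ih => simp only [Hc, Function.comp_apply, ih]

variable {X : Type*} [Fintype X] [DecidableEq X]

lemma pushforward_apply (g : X → X) (u : X → ℝ) (z : X) :
    pushforward g u z = ∑ x, if g x = z then u x else 0 := by
  rw [pushforward, Finset.sum_filter]

lemma pushforward_id (u : X → ℝ) : pushforward id u = u := by
  funext z
  simp [pushforward_apply]

lemma pushforward_comp (f g : X → X) (u : X → ℝ) :
    pushforward (f ∘ g) u = pushforward f (pushforward g u) := by
  funext z
  simp only [pushforward_apply, Function.comp_apply]
  have h1 : ∀ x, (if f x = z then ∑ x1, if g x1 = x then u x1 else 0 else 0)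
      = ∑ x1, if g x1 = x then (if f x = z then u x1 else 0) else 0 := by
    intro x
    split_ifs with h
    · rfl
    · simp
  simp only [h1]
  rw [Finset.sum_comm]
  refine Finset.sum_congr rfl fun x _ => ?_
  rw [Finset.sum_ite_eq Finset.univ (g x) (fun y => if f y = z then u x else 0)]
  simp

lemma l1Dist_nonneg (u v : X → ℝ) : 0 ≤ l1Dist u v :=
  Finset.sum_nonneg fun x _ => abs_nonneg _

lemma l1Dist_pushforward_congr (G : X → X) (u v u' v' : X → ℝ)
    (h : ∀ x, u x - v x = u' x - v' x) :
    l1Dist (pushforward G u) (pushforward G v) =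
      l1Dist (pushforward G u') (pushforward G v') := by
  unfold l1Dist
  refine Finset.sum_congr rfl fun z _ => ?_
  congr 1
  simp only [pushforward, ← Finset.sum_sub_distrib]
  exact Finset.sum_congr rfl fun x _ => h x

set_option linter.unusedSectionVars false

lemma pushforward_total (g : X → X) (u : X → ℝ) :
    ∑ z, pushforward g u z = ∑ x, u x := by
  simp only [pushforward_apply]
  rw [Finset.sum_comm]
  refine Finset.sum_congr rfl fun x _ => ?_
  rw [Finset.sum_ite_eq Finset.univ (g x) (fun _ => u x)]
  simp

lemma pushforward_nonneg (g : X → X) (u : X → ℝ) (hu : ∀ x, 0 ≤ u x) (z : X) :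
    0 ≤ pushforward g u z :=
  Finset.sum_nonneg fun x _ => hu x

lemma pushforward_ne_zero (g : X → X) (u : X → ℝ) (z : X)
    (h : pushforward g u z ≠ 0) : ∃ x, g x = z ∧ u x ≠ 0 := by
  obtain ⟨x, hx, hx0⟩ := Finset.exists_ne_zero_of_sum_ne_zero h
  exact ⟨x, (Finset.mem_filter.1 hx).2, hx0⟩

variable [MetricSpace X]

lemma glue (A B : X × X → ℝ) (m : X → ℝ)
    (hA : ∀ z, 0 ≤ A z) (hB : ∀ z, 0 ≤ B z)
    (hAm : ∀ y, ∑ x, A (x, y) = m y) (hBm : ∀ y, ∑ z, B (y, z) = m y) :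
    ∃ C : X × X → ℝ, (∀ z, 0 ≤ C z) ∧
      (∀ x, ∑ z, C (x, z) = ∑ y, A (x, y)) ∧
      (∀ z, ∑ x, C (x, z) = ∑ y, B (y, z)) ∧
      ∑ z : X × X, C z * dist z.1 z.2 ≤
        ∑ z : X × X, A z * dist z.1 z.2 + ∑ z : X × X, B z * dist z.1 z.2 := by
  classical
  set e : X → X → X → ℝ :=
    fun x y w => if m y = 0 then 0 else A (x, y) * B (y, w) / m y with he
  have hm : ∀ y, 0 ≤ m y := fun y => (hAm y) ▸ Finset.sum_nonneg fun x _ => hA _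
  have hA0 : ∀ x y, m y = 0 → A (x, y) = 0 := by
    intro x y hy
    have h1 : A (x, y) ≤ ∑ x', A (x', y) :=
      Finset.single_le_sum (fun i _ => hA (i, y)) (Finset.mem_univ x)
    rw [hAm y, hy] at h1
    exact le_antisymm h1 (hA _)
  have hB0 : ∀ y w, m y = 0 → B (y, w) = 0 := by
    intro y w hy
    have h1 : B (y, w) ≤ ∑ w', B (y, w') :=
      Finset.single_le_sum (fun i _ => hB (y, i)) (Finset.mem_univ w)
    rw [hBm y, hy] at h1
    exact le_antisymm h1 (hB _)
  have he0 : ∀ x y w, 0 ≤ e x y w := by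
    intro x y w
    rw [he]
    dsimp only
    split
    · exact le_refl 0
    · exact div_nonneg (mul_nonneg (hA _) (hB _)) (hm y)
  have hrow : ∀ x y, ∑ w, e x y w = A (x, y) := by
    intro x y
    by_cases hy : m y = 0
    · simp [he, hy, hA0 x y hy]
    · simp only [he, if_neg hy]
      rw [← Finset.sum_div, ← Finset.mul_sum, hBm y, mul_div_assoc,
        div_self hy, mul_one]
  have hcol : ∀ y w, ∑ x, e x y w = B (y, w) := by
    intro y w
    by_cases hy : m y = 0
    · simp [he, hy, hB0 y w hy]
    · simp only [he, if_neg hy]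
      rw [← Finset.sum_div, ← Finset.sum_mul, hAm y, mul_comm, mul_div_assoc,
        div_self hy, mul_one]
  refine ⟨fun z => ∑ y, e z.1 y z.2, fun z => Finset.sum_nonneg fun y _ => he0 _ _ _,
    ?_, ?_, ?_⟩
  · intro x
    rw [Finset.sum_comm]
    exact Finset.sum_congr rfl fun y _ => hrow x y
  · intro w
    show ∑ x, ∑ y, e x y w = _
    rw [Finset.sum_comm]
    exact Finset.sum_congr rfl fun y _ => hcol y w
  · calc ∑ z : X × X, (∑ y, e z.1 y z.2) * dist z.1 z.2
        = ∑ x, ∑ y, ∑ w, e x y w * dist x w := by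
          rw [Fintype.sum_prod_type]
          refine Finset.sum_congr rfl fun x _ => ?_
          rw [Finset.sum_comm]
          exact Finset.sum_congr rfl fun y _ => by rw [Finset.sum_mul]
      _ ≤ ∑ x, ∑ y, ∑ w, (e x y w * dist x y + e x y w * dist y w) := by
          refine Finset.sum_le_sum fun x _ => Finset.sum_le_sum fun y _ =>
            Finset.sum_le_sum fun w _ => ?_
          rw [← mul_add]
          exact mul_le_mul_of_nonneg_left (dist_triangle x y w) (he0 x y w)
      _ = ∑ x, ∑ y, (A (x, y) * dist x y + ∑ w, e x y w * dist y w) := by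
          refine Finset.sum_congr rfl fun x _ => Finset.sum_congr rfl fun y _ => ?_
          rw [Finset.sum_add_distrib, ← Finset.sum_mul, hrow x y]
      _ = (∑ x, ∑ y, A (x, y) * dist x y) + ∑ x, ∑ y, ∑ w, e x y w * dist y w := by
          simp only [Finset.sum_add_distrib]
      _ = ∑ z : X × X, A z * dist z.1 z.2 + ∑ z : X × X, B z * dist z.1 z.2 := by
          rw [Fintype.sum_prod_type]
          congr 1
          rw [Fintype.sum_prod_type, Finset.sum_comm]
          refine Finset.sum_congr rfl fun y _ => ?_
          rw [Finset.sum_comm]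
          refine Finset.sum_congr rfl fun w _ => ?_
          rw [← Finset.sum_mul, hcol]

lemma key (n : ℕ) :
    ∀ (h : ℕ → X → X) (a : ℕ → ℝ) (u v : X → ℝ),
    (∀ k, 0 ≤ a k) → (∀ x, 0 ≤ u x) → (∀ x, 0 ≤ v x) →
    (∑ x, u x = ∑ x, v x) →
    (∀ k, k < n → ∀ x, (u x ≠ 0 ∨ v x ≠ 0) → dist (Hc h k x) (Hc h (k + 1) x) ≤ a k) →
    (∀ x y, (u x ≠ 0 ∨ v x ≠ 0) → (u y ≠ 0 ∨ v y ≠ 0) → Hc h n x = Hc h n y) →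
    ∃ T : X × X → ℝ, (∀ z, 0 ≤ T z) ∧ (∀ x, ∑ y, T (x, y) = u x) ∧
      (∀ y, ∑ x, T (x, y) = v y) ∧
      ∑ z : X × X, T z * dist z.1 z.2 ≤
        ∑ k ∈ Finset.range n,
          a k * l1Dist (pushforward (Hc h k) u) (pushforward (Hc h k) v) := by
  induction n with
  | zero =>
    intro h a u v ha hu hv hsum hdist hconst
    have huv : u = v := by
      by_cases h0 : ∃ x, u x ≠ 0 ∨ v x ≠ 0
      · obtain ⟨x0, hx0⟩ := h0
        have hzero : ∀ y, y ≠ x0 → u y = 0 ∧ v y = 0 := by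
          intro y hy
          constructor
          · by_contra hc
            exact hy (hconst y x0 (Or.inl hc) hx0)
          · by_contra hc
            exact hy (hconst y x0 (Or.inr hc) hx0)
        have h1 : ∑ x, u x = u x0 :=
          Finset.sum_eq_single x0 (fun y _ hy => (hzero y hy).1)
            (fun hmem => absurd (Finset.mem_univ x0) hmem)
        have h2 : ∑ x, v x = v x0 :=
          Finset.sum_eq_single x0 (fun y _ hy => (hzero y hy).2)
            (fun hmem => absurd (Finset.mem_univ x0) hmem)
        funext x
        by_cases hx : x = x0
        · subst hx
          rw [← h1, ← h2, hsum]
        · rw [(hzero x hx).1, (hzero x hx).2]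
      · push_neg at h0
        funext x
        obtain ⟨h1, h2⟩ := h0 x
        rw [h1, h2]
    refine ⟨fun z => if z.1 = z.2 then u z.1 else 0, ?_, ?_, ?_, ?_⟩
    · intro z
      dsimp only
      split
      · exact hu _
      · exact le_refl 0
    · intro x
      simp
    · intro y
      rw [← huv]
      simp
    · have hz : ∀ z : X × X, (if z.1 = z.2 then u z.1 else 0) * dist z.1 z.2 = 0 := by
        intro z
        by_cases h1 : z.1 = z.2
        · simp [h1]
        · simp [h1]
      simp [hz]

  | succ n ih =>
    intro h a u v ha hu hv hsum hdist hconst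
    classical
    set m := fun x => min (u x) (v x) with hm
    set u' := fun x => u x - m x with hu'
    set v' := fun x => v x - m x with hv'
    have hm0 : ∀ x, 0 ≤ m x := fun x => le_min (hu x) (hv x)
    have hu'0 : ∀ x, 0 ≤ u' x := fun x => sub_nonneg.2 (min_le_left _ _)
    have hv'0 : ∀ x, 0 ≤ v' x := fun x => sub_nonneg.2 (min_le_right _ _)
    have hsum' : ∑ x, u' x = ∑ x, v' x := by
      simp only [hu', hv', Finset.sum_sub_distrib]
      rw [hsum]
    have hsuppu : ∀ x, u' x ≠ 0 → u x ≠ 0 := by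
      intro x hx hux
      apply hx
      simp only [hu', hm, hux]
      rw [min_eq_left (hv x)]
      ring
    have hsuppv : ∀ x, v' x ≠ 0 → v x ≠ 0 := by
      intro x hx hvx
      apply hx
      simp only [hv', hm, hvx]
      rw [min_eq_right (hu x)]
      ring
    have habs : ∀ x, |u x - v x| = u' x + v' x := by
      intro x
      simp only [hu', hv', hm]
      rw [← max_sub_min_eq_abs]
      have h2 := min_add_max (u x) (v x)
      have h3 := min_comm (u x) (v x)
      have h4 := max_comm (u x) (v x)
      linarith
    set u1 := pushforward (h 0) u' with hu1
    set v1 := pushforward (h 0) v' with hv1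
    set h' : ℕ → X → X := fun j => h (j + 1) with hh'
    have hsupp1 : ∀ z, (u1 z ≠ 0 ∨ v1 z ≠ 0) → ∃ x, h 0 x = z ∧ (u x ≠ 0 ∨ v x ≠ 0) := by
      intro z hz
      rcases hz with hz | hz
      · obtain ⟨x, hx, hx0⟩ := pushforward_ne_zero _ _ _ hz
        exact ⟨x, hx, Or.inl (hsuppu x hx0)⟩
      · obtain ⟨x, hx, hx0⟩ := pushforward_ne_zero _ _ _ hz
        exact ⟨x, hx, Or.inr (hsuppv x hx0)⟩
    have hd1 : ∀ k, k < n → ∀ z, (u1 z ≠ 0 ∨ v1 z ≠ 0) →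
        dist (Hc h' k z) (Hc h' (k + 1) z) ≤ a (k + 1) := by
      intro k hk z hz
      obtain ⟨x, rfl, hx⟩ := hsupp1 z hz
      rw [hh', Hc_shift, Hc_shift]
      exact hdist (k + 1) (by omega) x hx
    have hc1 : ∀ z w, (u1 z ≠ 0 ∨ v1 z ≠ 0) → (u1 w ≠ 0 ∨ v1 w ≠ 0) →
        Hc h' n z = Hc h' n w := by
      intro z w hz hw
      obtain ⟨x, rfl, hx⟩ := hsupp1 z hz
      obtain ⟨y, rfl, hy⟩ := hsupp1 w hw
      rw [hh', Hc_shift, Hc_shift]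
      exact hconst x y hx hy
    obtain ⟨T1, hT10, hT11, hT12, hT1c⟩ :=
      ih h' (fun k => a (k + 1)) u1 v1 (fun k => ha _)
        (pushforward_nonneg _ _ hu'0) (pushforward_nonneg _ _ hv'0)
        (by rw [hu1, hv1, pushforward_total, pushforward_total, hsum'])
        hd1 hc1
    -- map coupling A : from u' to u1
    set A : X × X → ℝ := fun z => if z.2 = h 0 z.1 then u' z.1 else 0 with hA
    have hA0 : ∀ z, 0 ≤ A z := by
      intro z
      rw [hA]
      dsimp only
      split
      · exact hu'0 _
      · exact le_refl 0
    have hArow : ∀ x, ∑ y, A (x, y) = u' x := by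
      intro x
      rw [hA]
      simp
    have hAcol : ∀ y, ∑ x, A (x, y) = u1 y := by
      intro y
      rw [hu1, pushforward_apply]
      refine Finset.sum_congr rfl fun x _ => ?_
      rw [hA]
      exact if_congr eq_comm rfl rfl
    have hAcost : ∑ z : X × X, A z * dist z.1 z.2 = ∑ x, u' x * dist x (h 0 x) := by
      rw [Fintype.sum_prod_type]
      refine Finset.sum_congr rfl fun x _ => ?_
      have h1 : ∀ y, A (x, y) * dist x y
          = if y = h 0 x then u' x * dist x (h 0 x) else 0 := by
        intro y
        rw [hA]
        dsimp only
        split_ifs with h2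
        · rw [h2]
        · ring
      simp only [h1]
      simp
    -- reversed map coupling Ar : from v1 to v'
    set Ar : X × X → ℝ := fun z => if z.1 = h 0 z.2 then v' z.2 else 0 with hAr
    have hAr0 : ∀ z, 0 ≤ Ar z := by
      intro z
      rw [hAr]
      dsimp only
      split
      · exact hv'0 _
      · exact le_refl 0
    have hArrow : ∀ y, ∑ z, Ar (y, z) = v1 y := by
      intro y
      rw [hv1, pushforward_apply]
      refine Finset.sum_congr rfl fun z _ => ?_
      rw [hAr]
      exact if_congr eq_comm rfl rfl
    have hArcol : ∀ z, ∑ y, Ar (y, z) = v' z := by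
      intro z
      rw [hAr]
      simp
    have hArcost : ∑ z : X × X, Ar z * dist z.1 z.2 = ∑ x, v' x * dist (h 0 x) x := by
      rw [Fintype.sum_prod_type, Finset.sum_comm]
      refine Finset.sum_congr rfl fun x _ => ?_
      have h1 : ∀ y, Ar (y, x) * dist y x
          = if y = h 0 x then v' x * dist (h 0 x) x else 0 := by
        intro y
        rw [hAr]
        dsimp only
        split_ifs with h2
        · rw [h2]
        · ring
      simp only [h1]
      simp
    -- glue A with T1
    obtain ⟨C2, hC20, hC21, hC22, hC2c⟩ := glue A T1 u1 hA0 hT10 hAcol hT11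
    -- glue C2 with Ar
    obtain ⟨S, hS0, hS1, hS2, hSc⟩ :=
      glue C2 Ar v1 hC20 hAr0 (fun z => (hC22 z).trans (hT12 z)) hArrow
    have hSrow : ∀ x, ∑ z, S (x, z) = u' x := fun x => (hS1 x).trans (hC21 x) |>.trans (hArow x)
    have hScol : ∀ z, ∑ x, S (x, z) = v' z := fun z => (hS2 z).trans (hArcol z)
    refine ⟨fun z => (if z.1 = z.2 then m z.1 else 0) + S z, ?_, ?_, ?_, ?_⟩
    · intro z
      have : (0:ℝ) ≤ if z.1 = z.2 then m z.1 else 0 := by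
        split
        · exact hm0 _
        · exact le_refl 0
      exact add_nonneg this (hS0 z)
    · intro x
      rw [Finset.sum_add_distrib, hSrow]
      simp [hu']
    · intro y
      rw [Finset.sum_add_distrib, hScol]
      simp [hv']
    · have hdiag : ∑ z : X × X, (if z.1 = z.2 then m z.1 else 0) * dist z.1 z.2 = 0 := by
        refine Finset.sum_eq_zero fun z _ => ?_
        by_cases h1 : z.1 = z.2
        · simp [h1]
        · simp [h1]
      have hsplit : ∑ z : X × X, ((if z.1 = z.2 then m z.1 else 0) + S z) * dist z.1 z.2
          = ∑ z : X × X, S z * dist z.1 z.2 := by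
        simp only [add_mul, Finset.sum_add_distrib, hdiag, zero_add]
      rw [hsplit]
      have hbound0 : ∑ x, u' x * dist x (h 0 x) ≤ ∑ x, u' x * a 0 := by
        refine Finset.sum_le_sum fun x _ => ?_
        by_cases hx : u' x = 0
        · simp [hx]
        · exact mul_le_mul_of_nonneg_left
            (hdist 0 (Nat.succ_pos n) x (Or.inl (hsuppu x hx))) (hu'0 x)
      have hbound0' : ∑ x, v' x * dist (h 0 x) x ≤ ∑ x, v' x * a 0 := by
        refine Finset.sum_le_sum fun x _ => ?_
        by_cases hx : v' x = 0
        · simp [hx]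
        · rw [dist_comm]
          exact mul_le_mul_of_nonneg_left
            (hdist 0 (Nat.succ_pos n) x (Or.inr (hsuppv x hx))) (hv'0 x)
      have hfirst : ∑ x, u' x * a 0 + ∑ x, v' x * a 0
          = a 0 * l1Dist (pushforward (Hc h 0) u) (pushforward (Hc h 0) v) := by
        have hHc0 : Hc h 0 = (id : X → X) := rfl
        rw [hHc0, pushforward_id, pushforward_id]
        unfold l1Dist
        rw [Finset.mul_sum, ← Finset.sum_add_distrib]
        refine Finset.sum_congr rfl fun x _ => ?_
        rw [habs x]
        ring
      have hterm : ∀ k, l1Dist (pushforward (Hc h' k) u1) (pushforward (Hc h' k) v1)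
          = l1Dist (pushforward (Hc h (k + 1)) u) (pushforward (Hc h (k + 1)) v) := by
        intro k
        rw [hu1, hv1, ← pushforward_comp, ← pushforward_comp]
        have hcomp : Hc h' k ∘ h 0 = Hc h (k + 1) := by
          funext x
          simp only [Function.comp_apply, hh']
          exact Hc_shift h k x
        rw [hcomp]
        exact (l1Dist_pushforward_congr _ u v u' v' fun x => by
          simp only [hu', hv']; ring).symm
      calc ∑ z : X × X, S z * dist z.1 z.2
          ≤ (∑ z : X × X, A z * dist z.1 z.2 + ∑ z : X × X, T1 z * dist z.1 z.2)
            + ∑ z : X × X, Ar z * dist z.1 z.2 :=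
              le_trans hSc (add_le_add hC2c le_rfl)
        _ ≤ (∑ x, u' x * a 0 + ∑ k ∈ Finset.range n,
              a (k + 1) * l1Dist (pushforward (Hc h (k + 1)) u)
                (pushforward (Hc h (k + 1)) v)) + ∑ x, v' x * a 0 := by
            rw [hAcost, hArcost]
            refine add_le_add (add_le_add hbound0 ?_) hbound0'
            refine hT1c.trans (le_of_eq (Finset.sum_congr rfl fun k _ => ?_))
            rw [hterm k]
        _ = a 0 * l1Dist (pushforward (Hc h 0) u) (pushforward (Hc h 0) v)
            + ∑ k ∈ Finset.range n,
              a (k + 1) * l1Dist (pushforward (Hc h (k + 1)) u)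
                (pushforward (Hc h (k + 1)) v) := by
            rw [← hfirst]
            ring
        _ = ∑ k ∈ Finset.range (n + 1),
              a k * l1Dist (pushforward (Hc h k) u) (pushforward (Hc h k) v) := by
            rw [Finset.sum_range_succ']
            exact add_comm _ _

end Aux

/-- Hierarchical setup: if `d(x, g_l(x)) ≤ 2^l`, `d(g_i(x), g_{i+1}(x)) ≤ 2^(i+1)` for
`l ≤ i < r`, and `g_r` is constant, then
`W_d(p,q) ≤ 2^l·‖p−q‖₁ + ∑_{i=l}^{r−1} 2^(i+1)·‖g_i♯p − g_i♯q‖₁`. -/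
theorem wasserstein_le_sum_l1
    {X : Type*} [MetricSpace X] [Fintype X] [Nonempty X] [DecidableEq X]
    (l r : ℤ) (hlr : l ≤ r) (π g : ℤ → X → X)
    (hgl : g l = π l)
    (hgs : ∀ i : ℤ, l ≤ i → i < r → g (i + 1) = π (i + 1) ∘ g i)
    (hdl : ∀ x : X, dist x (g l x) ≤ (2 : ℝ) ^ l)
    (hds : ∀ i : ℤ, l ≤ i → i < r → ∀ x : X, dist (g i x) (g (i + 1) x) ≤ (2 : ℝ) ^ (i + 1))
    (hconst : ∃ z : X, ∀ x : X, g r x = z)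
    (p q : X → ℝ) (hp : IsProb p) (hq : IsProb q) :
    wassersteinDist (fun x y => dist x y) p q ≤
      (2 : ℝ) ^ l * l1Dist p q +
        ∑ i ∈ Finset.Icc l (r - 1),
          (2 : ℝ) ^ (i + 1) * l1Dist (pushforward (g i) p) (pushforward (g i) q) := by
  classical
  obtain ⟨hp0, hp1⟩ := hp
  obtain ⟨hq0, hq1⟩ := hq
  set n0 : ℕ := (r - l).toNat with hn0
  have hn0' : (n0 : ℤ) = r - l := Int.toNat_of_nonneg (by omega)
  set h : ℕ → X → X := fun k => if k = 0 then g l else π (l + k) with hh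
  have hHc : ∀ k : ℕ, (k : ℤ) ≤ r - l → Hc h (k + 1) = g (l + k) := by
    intro k
    induction k with
    | zero =>
      intro _
      have : Hc h 1 = h 0 := rfl
      rw [this, hh]
      simp
    | succ k ihk =>
      intro hk
      have hk' : (k : ℤ) ≤ r - l := by push_cast at hk ⊢; omega
      have h1 : Hc h (k + 2) = h (k + 1) ∘ Hc h (k + 1) := rfl
      rw [h1, ihk hk', hh]
      simp only [Nat.succ_ne_zero, if_false]
      have h2 : g (l + (k : ℤ) + 1) = π (l + (k : ℤ) + 1) ∘ g (l + (k : ℤ)) :=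
        hgs (l + k) (by omega) (by push_cast at hk; omega)
      have h3 : (l + ((k : ℕ) + 1 : ℕ) : ℤ) = l + (k : ℤ) + 1 := by push_cast; ring
      rw [h3, h2]
  set a : ℕ → ℝ := fun k => if k = 0 then (2 : ℝ) ^ l else (2 : ℝ) ^ (l + (k : ℤ)) with ha
  have ha0 : ∀ k, 0 ≤ a k := by
    intro k
    rw [ha]
    dsimp only
    split <;> positivity
  have hdist : ∀ k, k < n0 + 1 → ∀ x : X, (p x ≠ 0 ∨ q x ≠ 0) →
      dist (Hc h k x) (Hc h (k + 1) x) ≤ a k := by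
    intro k hk x _
    match k with
    | 0 =>
      have h1 : Hc h 0 x = x := rfl
      have h2 : Hc h 1 = g (l + (0 : ℕ)) := hHc 0 (by push_cast; omega)
      rw [h1, h2]
      simp only [Nat.cast_zero, add_zero]
      rw [ha]
      simpa using hdl x
    | (j + 1) =>
      have hj : (j : ℤ) < r - l := by
        have h5 : j < n0 := Nat.lt_of_succ_lt_succ hk
        omega
      have hHj : Hc h (j + 1) = g (l + (j : ℤ)) := hHc j (by omega)
      have hHj1 : Hc h (j + 1 + 1) = g (l + ((j : ℕ) + 1 : ℕ)) := hHc (j + 1) (by push_cast; omega)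
      have h3 : (l + ((j : ℕ) + 1 : ℕ) : ℤ) = l + (j : ℤ) + 1 := by push_cast; ring
      rw [hHj, hHj1, h3, ha]
      simp only [Nat.succ_ne_zero, if_false, h3]
      exact hds (l + j) (by omega) (by omega) x
  obtain ⟨z0, hz0⟩ := hconst
  have hHtop : Hc h (n0 + 1) = g r := by
    have h5 : l + (n0 : ℤ) = r := by omega
    rw [hHc n0 (le_of_eq hn0'), h5]
  have hcst : ∀ x y : X, (p x ≠ 0 ∨ q x ≠ 0) → (p y ≠ 0 ∨ q y ≠ 0) →
      Hc h (n0 + 1) x = Hc h (n0 + 1) y := by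
    intro x y _ _
    rw [hHtop, hz0 x, hz0 y]
  obtain ⟨T, hT0, hT1, hT2, hTc⟩ :=
    key (n0 + 1) h a p q ha0 hp0 hq0 (hp1.trans hq1.symm) hdist hcst
  have hWle : wassersteinDist (fun x y => dist x y) p q
      ≤ ∑ z : X × X, T z * dist z.1 z.2 := by
    apply csInf_le
    · refine ⟨0, ?_⟩
      rintro w ⟨M, ⟨hM0, -, -⟩, rfl⟩
      exact Finset.sum_nonneg fun z _ => mul_nonneg (hM0 z) dist_nonneg
    · exact ⟨T, ⟨hT0, hT1, hT2⟩, rfl⟩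
  refine hWle.trans (hTc.trans (le_of_eq ?_))
  rw [Finset.sum_range_succ']
  have hHc0 : Hc h 0 = (id : X → X) := rfl
  rw [hHc0, pushforward_id, pushforward_id, add_comm]
  have hsum2 : ∑ k ∈ Finset.range n0,
        a (k + 1) * l1Dist (pushforward (Hc h (k + 1)) p) (pushforward (Hc h (k + 1)) q)
      = ∑ i ∈ Finset.Icc l (r - 1),
        (2 : ℝ) ^ (i + 1) * l1Dist (pushforward (g i) p) (pushforward (g i) q) := by
    refine Finset.sum_nbij' (fun (k : ℕ) => l + (k : ℤ)) (fun (i : ℤ) => (i - l).toNat)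
      ?_ ?_ ?_ ?_ ?_
    · intro k hk
      simp only [Finset.mem_range] at hk
      simp only [Finset.mem_Icc]
      omega
    · intro i hi
      simp only [Finset.mem_Icc] at hi
      simp only [Finset.mem_range]
      omega
    · intro k hk
      show ((l + (k : ℤ)) - l).toNat = k
      omega
    · intro i hi
      simp only [Finset.mem_Icc] at hi
      show l + (((i - l).toNat : ℕ) : ℤ) = i
      omega
    · intro k hk
      simp only [Finset.mem_range] at hk
      have h4 : Hc h (k + 1) = g (l + (k : ℤ)) := hHc k (by omega)
      rw [h4, ha]
      simp only [Nat.succ_ne_zero, if_false]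
      congr 2
      push_cast
      ring
  rw [hsum2]
  congr 1
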